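/- Star graphs are determined by the Smith normal form of the distance Laplacian matrix: if G is a connected graph on n ≥ 2 vertices whose distance Laplacian matrix D^L(G) is equivalent over ℤ to the distance Laplacian matrix D^L(K_{1,n-1}) of the star graph K_{1,n-1}, then G is isomorphic to K_{1,n-1}. -/

import Mathlib

open Matrix MvPolynomial

variable {V : Type*}

/-- The distance matrix of a graph: the `(u,v)` entry is the graph distance `d_G(u,v)`. -/
noncomputable def distMatrix [Fintype V] (G : SimpleGraph V) : Matrix V V ℤ :=
  fun u v => (G.dist u v : ℤ)

/-- The transmission of a vertex: the sum of the distances to all vertices. -/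
noncomputable def transmission [Fintype V] (G : SimpleGraph V) (u : V) : ℤ :=
  ∑ v, (G.dist u v : ℤ)

/-- The distance Laplacian matrix `D^L(G) = diag(tr) - D(G)`. -/
noncomputable def distLaplacian [Fintype V] [DecidableEq V] (G : SimpleGraph V) : Matrix V V ℤ :=
  Matrix.diagonal (transmission G) - distMatrix G

/-- The signless distance Laplacian matrix `D^Q(G) = diag(tr) + D(G)`. -/
noncomputable def signlessDistLaplacian [Fintype V] [DecidableEq V] (G : SimpleGraph V) : Matrix V V ℤ :=
  Matrix.diagonal (transmission G) + distMatrix G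

/-- Two integer matrices are equivalent over `ℤ` if `M = U * N * W` with `U`, `W`
invertible over `ℤ` (unimodular). -/
def MatEquivZ [Fintype V] [DecidableEq V] (M N : Matrix V V ℤ) : Prop :=
  ∃ U W : Matrix V V ℤ, IsUnit U.det ∧ IsUnit W.det ∧ M = U * N * W

/-- `f` lists the diagonal entries of the Smith normal form of `M`:
the diagonal matrix `diagonal f` is equivalent to `M` over `ℤ`, consecutive entries
divide each other, and the entries are nonnegative (normalization over `ℤ`). -/
def IsSNF {N : ℕ} (M : Matrix (Fin N) (Fin N) ℤ) (f : Fin N → ℤ) : Prop :=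
  MatEquivZ M (Matrix.diagonal f) ∧ (∀ i j : Fin N, i ≤ j → f i ∣ f j) ∧ ∀ i, 0 ≤ f i

/-- The ideal generated by the determinants of all `k × k` submatrices of `M`. -/
def minorsIdeal {R : Type*} [CommRing R] [Fintype V] (M : Matrix V V R) (k : ℕ) : Ideal R :=
  Ideal.span (Set.range fun p : (Fin k → V) × (Fin k → V) => (M.submatrix p.1 p.2).det)

/-- The generalized distance matrix `D(G, X_G) = diag(X_G) + D(G)` over `ℤ[X_G]`. -/
noncomputable def genDistMatrix [Fintype V] [DecidableEq V] (G : SimpleGraph V) :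
    Matrix V V (MvPolynomial V ℤ) :=
  Matrix.diagonal (fun u => MvPolynomial.X u) +
    (distMatrix G).map (fun a => (a : MvPolynomial V ℤ))

/-- The `k`-th distance ideal `I_k(G, X_G)`: the ideal of `ℤ[X_G]` generated by the
determinants of all `k × k` submatrices of the generalized distance matrix. -/
noncomputable def distIdeal [Fintype V] [DecidableEq V] (G : SimpleGraph V) (k : ℕ) :
    Ideal (MvPolynomial V ℤ) :=
  minorsIdeal (genDistMatrix G) k

/-- The star graph `K_{1,n-1}` on `Fin n`: vertex `0` is the center, adjacent to all
other vertices, and all other pairs are nonadjacent. -/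
def starGraph (n : ℕ) : SimpleGraph (Fin n) where
  Adj u v := ¬ (((u : ℕ) = 0) ↔ ((v : ℕ) = 0))
  symm := ⟨fun _ _ h h' => h h'.symm⟩
  loopless := ⟨fun _ h => h Iff.rfl⟩


/-! ### Auxiliary lemmas -/

section MinorsIdeal

lemma minor_mem {R : Type*} [CommRing R] [Fintype V] (M : Matrix V V R) {k : ℕ}
    (r c : Fin k → V) : (M.submatrix r c).det ∈ minorsIdeal M k :=
  Ideal.subset_span ⟨(r, c), rfl⟩

lemma det_PQ {R : Type*} [CommRing R] [Fintype V] {k : ℕ}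
    (P : Matrix (Fin k) V R) (Q : Matrix V (Fin k) R) :
    (P * Q).det = ∑ g : Fin k → V, (∏ i, P i (g i)) * (Q.submatrix g id).det := by
  classical
  have h1 : (P * Q).det = Matrix.detRowAlternating (fun i => ∑ v : V, P i v • Q v) := by
    congr 1
    ext i j
    simp [Matrix.mul_apply, Finset.sum_apply]
  rw [h1]
  rw [show ((Matrix.detRowAlternating (fun i => ∑ v : V, P i v • Q v)) : R)
      = (Matrix.detRowAlternating (R := R) (n := Fin k)).toMultilinearMap
          (fun i => ∑ v : V, P i v • Q v) from rfl]
  rw [MultilinearMap.map_sum]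
  refine Finset.sum_congr rfl fun g _ => ?_
  show Matrix.det (Matrix.of fun i j => P i (g i) * (Q.submatrix g id) i j) = _
  rw [Matrix.det_mul_column]

lemma minorsIdeal_mul_left {R : Type*} [CommRing R] [Fintype V]
    (U M : Matrix V V R) (k : ℕ) : minorsIdeal (U * M) k ≤ minorsIdeal M k := by
  classical
  rw [minorsIdeal, Ideal.span_le]
  rintro x ⟨⟨r, c⟩, rfl⟩
  show ((U * M).submatrix r c).det ∈ minorsIdeal M k
  have hsub : (U * M).submatrix r c = (U.submatrix r id) * (M.submatrix id c) := by
    ext i j; simp [Matrix.mul_apply, Matrix.submatrix_apply]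
  simp only [hsub, det_PQ]
  refine Ideal.sum_mem _ fun g _ => Ideal.mul_mem_left _ _ ?_
  have : (M.submatrix id c).submatrix g id = M.submatrix g c := rfl
  rw [this]
  exact minor_mem M g c

lemma minorsIdeal_transpose {R : Type*} [CommRing R] [Fintype V]
    (M : Matrix V V R) (k : ℕ) : minorsIdeal Mᵀ k ≤ minorsIdeal M k := by
  rw [minorsIdeal, Ideal.span_le]
  rintro x ⟨⟨r, c⟩, rfl⟩
  show (Mᵀ.submatrix r c).det ∈ minorsIdeal M k
  have : (Mᵀ.submatrix r c) = (M.submatrix c r)ᵀ := rfl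
  rw [this, Matrix.det_transpose]
  exact minor_mem M c r

lemma minorsIdeal_mul_right {R : Type*} [CommRing R] [Fintype V]
    (M W : Matrix V V R) (k : ℕ) : minorsIdeal (M * W) k ≤ minorsIdeal M k := by
  have h1 : minorsIdeal (M * W) k ≤ minorsIdeal (M * W)ᵀ k := by
    have := minorsIdeal_transpose (M * W)ᵀ k
    rwa [Matrix.transpose_transpose] at this
  refine h1.trans ?_
  rw [Matrix.transpose_mul]
  exact (minorsIdeal_mul_left _ _ k).trans (minorsIdeal_transpose M k)

end MinorsIdeal

lemma dvd_det2 {q x00 x01 x10 x11 a0 a1 b0 b1 : ℤ}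
    (h00 : x00 ≡ a0 * b0 [ZMOD q]) (h01 : x01 ≡ a0 * b1 [ZMOD q])
    (h10 : x10 ≡ a1 * b0 [ZMOD q]) (h11 : x11 ≡ a1 * b1 [ZMOD q]) :
    q ∣ x00 * x11 - x01 * x10 := by
  have h := (h00.mul h11).sub (h01.mul h10)
  have hz : a0 * b0 * (a1 * b1) - a0 * b1 * (a1 * b0) = 0 := by ring
  rw [hz] at h
  exact Int.modEq_zero_iff_dvd.mp h


section StarFacts
variable {n : ℕ}

lemma finValZero {n : ℕ} [NeZero n] (v : Fin n) : (v : ℕ) = 0 ↔ v = 0 :=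
  ⟨fun h => Fin.ext (by simp [h]), fun h => by simp [h]⟩

lemma star_adj (u v : Fin n) : (starGraph n).Adj u v ↔ ¬ (((u : ℕ) = 0) ↔ ((v : ℕ) = 0)) :=
  Iff.rfl

lemma star_dist (hn : 2 ≤ n) (u v : Fin n) :
    (starGraph n).dist u v =
      if u = v then 0 else if (u : ℕ) = 0 ∨ (v : ℕ) = 0 then 1 else 2 := by
  haveI : NeZero n := ⟨by omega⟩
  rcases eq_or_ne u v with rfl | huv
  · simp [SimpleGraph.dist_self]
  · rw [if_neg huv]
    by_cases h0 : (u : ℕ) = 0 ∨ (v : ℕ) = 0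
    · rw [if_pos h0, SimpleGraph.dist_eq_one_iff_adj, star_adj]
      rcases h0 with h | h
      · intro hiff
        exact huv (Fin.ext (by rw [h, (hiff.mp h)]))
      · intro hiff
        exact huv (Fin.ext (by rw [h, hiff.mpr h]))
    · push_neg at h0
      rw [if_neg (by push_neg; exact h0)]
      have hu0 : (starGraph n).Adj u 0 := by
        rw [star_adj]
        simp [h0.1]
      have h0v : (starGraph n).Adj (0 : Fin n) v := by
        rw [star_adj]
        simp [h0.2]
      have hle : (starGraph n).dist u v ≤ 2 := by
        simpa using SimpleGraph.dist_le
          (SimpleGraph.Walk.cons hu0 (SimpleGraph.Walk.cons h0v SimpleGraph.Walk.nil))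
      have hne0 : (starGraph n).dist u v ≠ 0 := by
        have := (SimpleGraph.Reachable.pos_dist_of_ne
          ⟨SimpleGraph.Walk.cons hu0 (SimpleGraph.Walk.cons h0v SimpleGraph.Walk.nil)⟩ huv)
        omega
      have hne1 : (starGraph n).dist u v ≠ 1 := by
        rw [Ne, SimpleGraph.dist_eq_one_iff_adj, star_adj]
        intro hadj
        exact hadj (by simp [h0.1, h0.2])
      omega

lemma star_transmission (hn : 2 ≤ n) (u : Fin n) :
    transmission (starGraph n) u = if (u : ℕ) = 0 then (n : ℤ) - 1 else 2 * n - 3 := by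
  haveI : NeZero n := ⟨by omega⟩
  rw [transmission]
  by_cases hu : (u : ℕ) = 0
  · rw [if_pos hu]
    have : ∀ v : Fin n, ((starGraph n).dist u v : ℤ) = 1 - (if v = u then 1 else 0) := by
      intro v
      rw [star_dist hn]
      rcases eq_or_ne u v with rfl | huv
      · simp
      · rw [if_neg huv, if_pos (Or.inl hu), if_neg (Ne.symm huv)]
        norm_num
    rw [Finset.sum_congr rfl fun v _ => this v, Finset.sum_sub_distrib,
      Finset.sum_ite_eq' Finset.univ u (fun _ => (1 : ℤ))]
    simp [mul_comm]
  · rw [if_neg hu]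
    have hvz : ∀ v : Fin n, (v : ℕ) = 0 ↔ v = 0 := fun v => finValZero v
    have : ∀ v : Fin n, ((starGraph n).dist u v : ℤ) =
        2 - (if v = u then 2 else 0) - (if v = 0 then 1 else 0) := by
      intro v
      rw [star_dist hn]
      rcases eq_or_ne u v with rfl | huv
      · have : ¬ (u = (0 : Fin n)) := fun h => hu (by rw [h]; simp)
        simp [this]
      · rw [if_neg huv, if_neg (Ne.symm huv)]
        by_cases hv : (v : ℕ) = 0
        · rw [if_pos (Or.inr hv), if_pos ((hvz v).mp hv)]
          norm_num
        · rw [if_neg (by push_neg; exact ⟨hu, hv⟩), if_neg (fun h => hv ((hvz v).mpr h))]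
          norm_num
    rw [Finset.sum_congr rfl fun v _ => this v, Finset.sum_sub_distrib, Finset.sum_sub_distrib,
      Finset.sum_ite_eq' Finset.univ u (fun _ => (2 : ℤ)),
      Finset.sum_ite_eq' Finset.univ (0 : Fin n) (fun _ => (1 : ℤ))]
    simp [mul_comm]
    ring

lemma star_entry (hn : 2 ≤ n) (u v : Fin n) :
    distLaplacian (starGraph n) u v =
      if u = v then (if (u : ℕ) = 0 then (n : ℤ) - 1 else 2 * n - 3)
      else -(if (u : ℕ) = 0 ∨ (v : ℕ) = 0 then 1 else 2) := by
  rw [distLaplacian, Matrix.sub_apply, distMatrix, star_dist hn]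
  rcases eq_or_ne u v with rfl | huv
  · rw [Matrix.diagonal_apply_eq, star_transmission hn]
    simp
  · rw [Matrix.diagonal_apply_ne _ huv, if_neg huv, if_neg huv]
    push_cast
    split <;> ring

lemma star_entry_modeq (hn : 2 ≤ n) (u v : Fin n) :
    (distLaplacian (starGraph n) u v) ≡
      ((if (u : ℕ) = 0 then (-1 : ℤ) else -2) * (if (v : ℕ) = 0 then (n : ℤ) else 1))
      [ZMOD (2 * (n : ℤ) - 1)] := by
  rw [star_entry hn, Int.modEq_iff_dvd]
  rcases eq_or_ne u v with rfl | huv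
  · by_cases hu : (u : ℕ) = 0
    · rw [if_pos rfl, if_pos hu, if_pos hu, if_pos hu]
      exact ⟨-1, by ring⟩
    · rw [if_pos rfl, if_neg hu, if_neg hu, if_neg hu]
      exact ⟨-1, by ring⟩
  · rw [if_neg huv]
    by_cases hu : (u : ℕ) = 0 <;> by_cases hv : (v : ℕ) = 0
    · exact absurd (Fin.ext (hu.trans hv.symm)) huv
    · rw [if_pos hu, if_neg hv, if_pos (Or.inl hu)]
      exact ⟨0, by ring⟩
    · rw [if_neg hu, if_pos hv, if_pos (Or.inr hv)]
      exact ⟨-1, by ring⟩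
    · rw [if_neg hu, if_neg hv, if_neg (by push_neg; exact ⟨hu, hv⟩)]
      exact ⟨0, by ring⟩

lemma star_center_iso (hn : 2 ≤ n) (G : SimpleGraph (Fin n)) (c : Fin n)
    (hc : ∀ x y, G.Adj x y ↔ ¬ (x = c ↔ y = c)) : Nonempty (G ≃g starGraph n) := by
  haveI : NeZero n := ⟨by omega⟩
  have hs : ∀ z : Fin n, Equiv.swap c 0 z = 0 ↔ z = c := by
    intro z
    constructor
    · intro hz
      have : Equiv.swap c 0 z = Equiv.swap c 0 c := by rw [hz, Equiv.swap_apply_left]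
      exact (Equiv.swap c 0).injective this
    · intro hz
      rw [hz, Equiv.swap_apply_left]
  refine ⟨⟨Equiv.swap c 0, ?_⟩⟩
  intro x y
  show (starGraph n).Adj (Equiv.swap c 0 x) (Equiv.swap c 0 y) ↔ G.Adj x y
  rw [star_adj, hc x y, finValZero, finValZero, hs x, hs y]

end StarFacts

section WalkDist
variable {W : Type*} {G : SimpleGraph W}

lemma dist_getVert_le (hG : G.Connected) {u v : W} (p : G.Walk u v) :
    ∀ i : ℕ, G.dist u (p.getVert i) ≤ i := by
  induction p with
  | nil => intro i; simp [SimpleGraph.Walk.getVert, SimpleGraph.dist_self]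
  | @cons a b c hadj p ih =>
    intro i
    cases i with
    | zero => simp [SimpleGraph.Walk.getVert_zero, SimpleGraph.dist_self]
    | succ j =>
      rw [SimpleGraph.Walk.getVert_cons_succ]
      calc G.dist a (p.getVert j) ≤ G.dist a b + G.dist b (p.getVert j) := hG.dist_triangle
        _ ≤ 1 + j := by
            have h1 : G.dist a b ≤ 1 := by simpa using SimpleGraph.dist_le hadj.toWalk
            exact add_le_add h1 (ih j)
        _ = j + 1 := by omega

lemma dist_getVert_le' {u v : W} (p : G.Walk u v) :
    ∀ i : ℕ, G.dist (p.getVert i) v ≤ p.length - i := by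
  induction p with
  | nil => intro i; simp [SimpleGraph.Walk.getVert, SimpleGraph.dist_self]
  | @cons a b c hadj p ih =>
    intro i
    cases i with
    | zero =>
      rw [SimpleGraph.Walk.getVert_zero]
      have := SimpleGraph.dist_le (SimpleGraph.Walk.cons hadj p)
      simpa using this
    | succ j =>
      rw [SimpleGraph.Walk.getVert_cons_succ]
      have := ih j
      have hlen : (SimpleGraph.Walk.cons hadj p).length = p.length + 1 := by simp
      omega

end WalkDist

/-- Star graphs are determined by the SNF of the distance Laplacian matrix:
if `G` is a connected graph on `n ≥ 2` vertices whose distance Laplacian matrix is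
equivalent over `ℤ` to that of the star `K_{1,n-1}`, then `G` is isomorphic to
`K_{1,n-1}`. -/
theorem starGraph_determined_by_snf_distLaplacian (n : ℕ) (hn : 2 ≤ n)
    (G : SimpleGraph (Fin n)) (hG : G.Connected)
    (h : MatEquivZ (distLaplacian G) (distLaplacian (starGraph n))) :
    Nonempty (G ≃g starGraph n) := by
  classical
  haveI : NeZero n := ⟨by omega⟩
  -- Every 2×2 minor of the distance Laplacian of G is divisible by q = 2n-1.
  have hminor : ∀ r c : Fin 2 → Fin n,
      (2 * (n : ℤ) - 1) ∣ ((distLaplacian G).submatrix r c).det := by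
    obtain ⟨U, W, _, _, hM⟩ := h
    intro r c
    have hmem : ((distLaplacian G).submatrix r c).det ∈ minorsIdeal (distLaplacian G) 2 :=
      minor_mem _ r c
    have hle : minorsIdeal (distLaplacian G) 2 ≤ minorsIdeal (distLaplacian (starGraph n)) 2 := by
      rw [hM, mul_assoc]
      exact (minorsIdeal_mul_left _ _ 2).trans (minorsIdeal_mul_right _ _ 2)
    have hle2 : minorsIdeal (distLaplacian (starGraph n)) 2 ≤
        Ideal.span {(2 * (n : ℤ) - 1)} := by
      rw [minorsIdeal, Ideal.span_le]
      rintro x ⟨⟨r', c'⟩, rfl⟩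
      show ((distLaplacian (starGraph n)).submatrix r' c').det ∈
        Ideal.span {(2 * (n : ℤ) - 1)}
      rw [Ideal.mem_span_singleton]
      rw [Matrix.det_fin_two]
      simp only [Matrix.submatrix_apply]
      exact dvd_det2 (star_entry_modeq hn (r' 0) (c' 0)) (star_entry_modeq hn (r' 0) (c' 1))
        (star_entry_modeq hn (r' 1) (c' 0)) (star_entry_modeq hn (r' 1) (c' 1))
    exact Ideal.mem_span_singleton.mp (hle2 (hle hmem))
  have Ldiag : ∀ u : Fin n, distLaplacian G u u = transmission G u := by
    intro u
    simp [distLaplacian, Matrix.sub_apply, distMatrix, SimpleGraph.dist_self]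
  have Loff : ∀ u v : Fin n, u ≠ v → distLaplacian G u v = -(G.dist u v : ℤ) := by
    intro u v huv
    simp [distLaplacian, Matrix.sub_apply, distMatrix, Matrix.diagonal_apply_ne _ huv]
  have hm4 : ∀ u v w x : Fin n, (2 * (n : ℤ) - 1) ∣
      (distLaplacian G u w * distLaplacian G v x - distLaplacian G u x * distLaplacian G v w) := by
    intro u v w x
    have := hminor ![u, v] ![w, x]
    rw [Matrix.det_fin_two] at this
    simpa [Matrix.submatrix_apply] using this
  -- (A):  q ∣ t(u) t(v) - d(u,v)²  for u ≠ v
  have hA : ∀ u v : Fin n, u ≠ v →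
      (2 * (n : ℤ) - 1) ∣ (transmission G u * transmission G v - (G.dist u v : ℤ) ^ 2) := by
    intro u v huv
    have hm := hm4 u v u v
    rw [Ldiag u, Ldiag v, Loff u v huv, Loff v u huv.symm] at hm
    convert hm using 1
    rw [SimpleGraph.dist_comm (u := v) (v := u)]
    ring
  -- (B):  q ∣ t(u) d(v,w) + d(u,v) d(u,w)  for distinct u,v,w
  have hB : ∀ u v w : Fin n, u ≠ v → u ≠ w → v ≠ w →
      (2 * (n : ℤ) - 1) ∣
        (transmission G u * (G.dist v w : ℤ) + (G.dist u v : ℤ) * (G.dist u w : ℤ)) := by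
    intro u v w huv huw hvw
    have hm := hm4 u v u w
    rw [Ldiag u, Loff v w hvw, Loff u w huw, Loff v u huv.symm] at hm
    have hm2 : (2 * (n : ℤ) - 1) ∣ _ := (dvd_neg (α := ℤ)).mpr hm
    convert hm2 using 1
    rw [SimpleGraph.dist_comm (u := v) (v := u)]
    ring
  -- every vertex has a neighbour
  have hnbr : ∀ u : Fin n, ∃ w, G.Adj u w := by
    intro u
    obtain ⟨v', hv'⟩ := Fintype.exists_ne_of_one_lt_card (by simp; omega) u
    have hd : G.dist u v' ≠ 0 := by
      have := hG.pos_dist_of_ne (Ne.symm hv')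
      omega
    obtain ⟨p, hp⟩ := SimpleGraph.exists_walk_of_dist_ne_zero hd
    have hlen : 0 < p.length := by
      rw [hp]
      omega
    have := p.adj_getVert_succ (i := 0) hlen
    rw [SimpleGraph.Walk.getVert_zero] at this
    exact ⟨_, this⟩
  -- G has diameter at most 2
  have hdiam : ∀ u v : Fin n, G.dist u v ≤ 2 := by
    intro u v
    by_contra hlt
    push_neg at hlt
    obtain ⟨p, hp⟩ := hG.exists_walk_length_eq_dist u v
    have hu1 := dist_getVert_le hG p 1
    have hu2 := dist_getVert_le hG p 2
    have hu3 := dist_getVert_le hG p 3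
    have hv1 := dist_getVert_le' p 1
    have hv2 := dist_getVert_le' p 2
    have hv3 := dist_getVert_le' p 3
    have ht1 := hG.dist_triangle (u := u) (v := p.getVert 1) (w := v)
    have ht2 := hG.dist_triangle (u := u) (v := p.getVert 2) (w := v)
    have ht3 := hG.dist_triangle (u := u) (v := p.getVert 3) (w := v)
    rw [hp] at hv1 hv2 hv3
    have du1 : G.dist u (p.getVert 1) = 1 := by omega
    have du2 : G.dist u (p.getVert 2) = 2 := by omega
    have du3 : G.dist u (p.getVert 3) = 3 := by omega
    have ha12 : G.Adj (p.getVert 1) (p.getVert 2) :=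
      p.adj_getVert_succ (i := 1) (by omega)
    have ha23 : G.Adj (p.getVert 2) (p.getVert 3) :=
      p.adj_getVert_succ (i := 2) (by omega)
    have d12 : G.dist (p.getVert 1) (p.getVert 2) = 1 :=
      SimpleGraph.dist_eq_one_iff_adj.mpr ha12
    have d23 : G.dist (p.getVert 2) (p.getVert 3) = 1 :=
      SimpleGraph.dist_eq_one_iff_adj.mpr ha23
    have d13 : G.dist (p.getVert 1) (p.getVert 3) = 2 := by
      have hle := hG.dist_triangle (u := p.getVert 1) (v := p.getVert 2) (w := p.getVert 3)
      have hge := hG.dist_triangle (u := u) (v := p.getVert 1) (w := p.getVert 3)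
      omega
    have hne1 : u ≠ p.getVert 1 := by
      intro e; rw [← e, SimpleGraph.dist_self] at du1; omega
    have hne2 : u ≠ p.getVert 2 := by
      intro e; rw [← e, SimpleGraph.dist_self] at du2; omega
    have hne3 : u ≠ p.getVert 3 := by
      intro e; rw [← e, SimpleGraph.dist_self] at du3; omega
    have hb1 := hB u (p.getVert 1) (p.getVert 2) hne1 hne2 ha12.ne
    have hb2 := hB u (p.getVert 2) (p.getVert 3) hne2 hne3 ha23.ne
    rw [d12, du1, du2] at hb1
    rw [d23, du2, du3] at hb2
    push_cast at hb1 hb2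
    have h4 : (2 * (n : ℤ) - 1) ∣ (4 : ℤ) := by
      have hsub : (2 * (n : ℤ) - 1) ∣ _ := dvd_sub hb2 hb1
      convert hsub using 1
      push_cast
      ring
    have hle4 : (2 * (n : ℤ) - 1) ≤ 4 := Int.le_of_dvd (by norm_num) h4
    have hn2 : n = 2 := by omega
    subst hn2
    norm_num at h4
  -- transmission bounds
  have htr_nonneg : ∀ u : Fin n, 0 ≤ transmission G u := by
    intro u
    exact Finset.sum_nonneg fun v _ => by positivity
  have htr_le : ∀ u : Fin n, transmission G u ≤ 2 * (n : ℤ) - 3 := by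
    intro u
    obtain ⟨w0, hw0⟩ := hnbr u
    have key : ∀ v : Fin n, (G.dist u v : ℤ) ≤
        2 - (if v = u then 2 else 0) - (if v = w0 then 1 else 0) := by
      intro v
      by_cases h1 : v = u
      · subst h1
        rw [SimpleGraph.dist_self, if_pos rfl, if_neg (fun e => hw0.ne e)]
        norm_num
      · by_cases h2 : v = w0
        · subst h2
          rw [SimpleGraph.dist_eq_one_iff_adj.mpr hw0, if_neg h1, if_pos rfl]
          norm_num
        · rw [if_neg h1, if_neg h2]
          have := hdiam u v
          push_cast
          omega
    calc transmission G u ≤ ∑ v : Fin n,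
          (2 - (if v = u then 2 else 0) - (if v = w0 then 1 else 0)) :=
        Finset.sum_le_sum fun v _ => key v
      _ = 2 * (n : ℤ) - 3 := by
        rw [Finset.sum_sub_distrib, Finset.sum_sub_distrib, Finset.sum_const,
          Finset.sum_ite_eq' Finset.univ u (fun _ => (2 : ℤ)),
          Finset.sum_ite_eq' Finset.univ w0 (fun _ => (1 : ℤ))]
        simp [Finset.card_univ, mul_comm]
        ring
  have hnd : ∀ u : Fin n, ¬ ((2 * (n : ℤ) - 1) ∣ (transmission G u + 1)) := by
    intro u hdvd
    have h1 : (0 : ℤ) < transmission G u + 1 := by have := htr_nonneg u; omega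
    have h2 := Int.le_of_dvd h1 hdvd
    have h3 := htr_le u
    omega
  have hd12 : ∀ u v : Fin n, u ≠ v → G.dist u v = 1 ∨ G.dist u v = 2 := by
    intro u v huv
    have := hG.pos_dist_of_ne huv
    have := hdiam u v
    omega
  -- dichotomy: for an edge uv and any other vertex w, w is adjacent to exactly one of u, v
  have hdichot : ∀ u v w : Fin n, G.Adj u v → w ≠ u → w ≠ v →
      (G.Adj u w ↔ ¬ G.Adj v w) := by
    intro u v w huv hwu hwv
    have hduv : G.dist u v = 1 := SimpleGraph.dist_eq_one_iff_adj.mpr huv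
    have hb := hB u v w huv.ne (Ne.symm hwu) (Ne.symm hwv)
    rw [hduv] at hb
    rcases hd12 u w (Ne.symm hwu) with h1 | h1 <;> rcases hd12 v w (Ne.symm hwv) with h2 | h2
    · rw [h1, h2] at hb
      push_cast at hb
      have : (2 * (n : ℤ) - 1) ∣ (transmission G u + 1) := by
        convert hb using 1
        push_cast
        ring
      exact absurd this (hnd u)
    · refine ⟨fun _ hvw => ?_, fun _ => SimpleGraph.dist_eq_one_iff_adj.mp h1⟩
      have := SimpleGraph.dist_eq_one_iff_adj.mpr hvw
      omega
    · constructor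
      · intro huw
        have := SimpleGraph.dist_eq_one_iff_adj.mpr huw
        omega
      · intro hnvw
        exact absurd (SimpleGraph.dist_eq_one_iff_adj.mp h2) hnvw
    · rw [h1, h2] at hb
      push_cast at hb
      have hdd : (2 * (n : ℤ) - 1) ∣ 2 * (transmission G u + 1) := by
        convert hb using 1
        push_cast
        ring
      have hco : IsCoprime (2 * (n : ℤ) - 1) 2 := ⟨-1, n, by push_cast; ring⟩
      exact absurd (hco.dvd_of_dvd_mul_left hdd) (hnd u)
  -- pick an edge (u0, v0)
  obtain ⟨v0, hu0v0⟩ := hnbr ⟨0, by omega⟩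
  set u0 : Fin n := ⟨0, by omega⟩ with hu0def
  clear_value u0
  -- basic structure facts
  have hcover : ∀ w : Fin n, G.Adj w v0 ∨ G.Adj w u0 := by
    intro w
    by_cases h1 : w = u0
    · left; rw [h1]; exact hu0v0
    by_cases h2 : w = v0
    · right; rw [h2]; exact hu0v0.symm
    have hdi := hdichot u0 v0 w hu0v0 h1 h2
    by_cases h3 : G.Adj v0 w
    · left; exact h3.symm
    · right; exact (hdi.mpr h3).symm
  have hdisj : ∀ w : Fin n, ¬ (G.Adj w v0 ∧ G.Adj w u0) := by
    rintro w ⟨h1, h2⟩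
    have hdi := hdichot u0 v0 w hu0v0 h2.ne h1.ne
    exact (hdi.mp h2.symm) h1.symm
  have hAind : ∀ x y : Fin n, G.Adj x v0 → G.Adj y v0 → ¬ G.Adj x y := by
    intro x y hx hy hadj
    have hdi := hdichot x y v0 hadj (Ne.symm hx.ne) (Ne.symm hy.ne)
    exact (hdi.mp hx) hy
  have hBind : ∀ x y : Fin n, G.Adj x u0 → G.Adj y u0 → ¬ G.Adj x y := by
    intro x y hx hy hadj
    have hdi := hdichot x y u0 hadj (Ne.symm hx.ne) (Ne.symm hy.ne)
    exact (hdi.mp hx) hy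
  have hcross : ∀ x y : Fin n, G.Adj x v0 → G.Adj y u0 → G.Adj x y := by
    intro x y hx hy
    have hxy : x ≠ y := by
      intro e
      exact hdisj x ⟨hx, by rw [e]; exact hy⟩
    by_cases hxu : x = u0
    · rw [hxu]; exact hy.symm
    by_cases hyv : y = v0
    · rw [hyv]; exact hx
    have hdi := hdichot x v0 y hx (Ne.symm hxy) hyv
    apply hdi.mpr
    intro hv0y
    exact hdisj y ⟨hv0y.symm, hy⟩
  -- case analysis: G is a star, or G is complete bipartite with parts of size ≥ 2
  by_cases hA2 : ∃ a : Fin n, G.Adj a v0 ∧ a ≠ u0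
  · by_cases hB2 : ∃ b : Fin n, G.Adj b u0 ∧ b ≠ v0
    · -- complete bipartite with both parts of size ≥ 2: contradiction
      exfalso
      obtain ⟨a, haA, hau0⟩ := hA2
      obtain ⟨b, hbB, hbv0⟩ := hB2
      have hdAA : ∀ x y : Fin n, G.Adj x v0 → G.Adj y v0 → x ≠ y → G.dist x y = 2 := by
        intro x y hx hy hxy
        rcases hd12 x y hxy with h1 | h1
        · exact absurd (SimpleGraph.dist_eq_one_iff_adj.mp h1) (hAind x y hx hy)
        · exact h1
      have hdBB : ∀ x y : Fin n, G.Adj x u0 → G.Adj y u0 → x ≠ y → G.dist x y = 2 := by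
        intro x y hx hy hxy
        rcases hd12 x y hxy with h1 | h1
        · exact absurd (SimpleGraph.dist_eq_one_iff_adj.mp h1) (hBind x y hx hy)
        · exact h1
      -- transmissions in terms of part sizes
      have htA : ∀ x : Fin n, G.Adj x v0 → transmission G x =
          2 * (n : ℤ) - 2 - ((Finset.univ.filter (fun y : Fin n => G.Adj y u0)).card : ℤ) := by
        intro x hx
        have key : ∀ y : Fin n, (G.dist x y : ℤ) =
            2 - (if y = x then 2 else 0) - (if G.Adj y u0 then 1 else 0) := by
          intro y
          by_cases h1 : y = x
          · subst h1
            rw [SimpleGraph.dist_self, if_pos rfl,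
              if_neg (fun hy => hdisj y ⟨hx, hy⟩)]
            norm_num
          · by_cases h2 : G.Adj y u0
            · rw [SimpleGraph.dist_eq_one_iff_adj.mpr (hcross x y hx h2),
                if_neg h1, if_pos h2]
              norm_num
            · have hy : G.Adj y v0 := (hcover y).resolve_right h2
              rw [hdAA x y hx hy (Ne.symm h1), if_neg h1, if_neg h2]
              norm_num
        rw [transmission, Finset.sum_congr rfl fun y _ => key y,
          Finset.sum_sub_distrib, Finset.sum_sub_distrib, Finset.sum_const,
          Finset.sum_ite_eq' Finset.univ x (fun _ => (2 : ℤ)), Finset.sum_boole]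
        simp [Finset.card_univ, mul_comm]
      have htB : ∀ x : Fin n, G.Adj x u0 → transmission G x =
          2 * (n : ℤ) - 2 - ((Finset.univ.filter (fun y : Fin n => G.Adj y v0)).card : ℤ) := by
        intro x hx
        have key : ∀ y : Fin n, (G.dist x y : ℤ) =
            2 - (if y = x then 2 else 0) - (if G.Adj y v0 then 1 else 0) := by
          intro y
          by_cases h1 : y = x
          · subst h1
            rw [SimpleGraph.dist_self, if_pos rfl,
              if_neg (fun hy => hdisj y ⟨hy, hx⟩)]
            norm_num
          · by_cases h2 : G.Adj y v0
            · rw [SimpleGraph.dist_comm, SimpleGraph.dist_eq_one_iff_adj.mpr (hcross y x h2 hx),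
                if_neg h1, if_pos h2]
              norm_num
            · have hy : G.Adj y u0 := (hcover y).resolve_left h2
              rw [hdBB x y hx hy (Ne.symm h1), if_neg h1, if_neg h2]
              norm_num
        rw [transmission, Finset.sum_congr rfl fun y _ => key y,
          Finset.sum_sub_distrib, Finset.sum_sub_distrib, Finset.sum_const,
          Finset.sum_ite_eq' Finset.univ x (fun _ => (2 : ℤ)), Finset.sum_boole]
        simp [Finset.card_univ, mul_comm]
      -- part sizes
      have hsum : (Finset.univ.filter (fun y : Fin n => G.Adj y v0)).card +
          (Finset.univ.filter (fun y : Fin n => G.Adj y u0)).card = n := by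
        have hiff : ∀ y ∈ Finset.univ, G.Adj y u0 ↔ ¬ G.Adj y v0 := by
          intro y _
          constructor
          · intro h2 h1; exact hdisj y ⟨h1, h2⟩
          · intro h1; exact (hcover y).resolve_left h1
        rw [Finset.filter_congr hiff]
        rw [Finset.card_filter_add_card_filter_not]
        simp
      have hcA2 : 2 ≤ (Finset.univ.filter (fun y : Fin n => G.Adj y v0)).card := by
        have hsub : ({a, u0} : Finset (Fin n)) ⊆
            Finset.univ.filter (fun y : Fin n => G.Adj y v0) := by
          intro z hz
          simp only [Finset.mem_insert, Finset.mem_singleton] at hz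
          rcases hz with rfl | rfl <;> simp [haA, hu0v0]
        calc 2 = ({a, u0} : Finset (Fin n)).card := (Finset.card_pair hau0).symm
          _ ≤ _ := Finset.card_le_card hsub
      have hcB2 : 2 ≤ (Finset.univ.filter (fun y : Fin n => G.Adj y u0)).card := by
        have hsub : ({b, v0} : Finset (Fin n)) ⊆
            Finset.univ.filter (fun y : Fin n => G.Adj y u0) := by
          intro z hz
          simp only [Finset.mem_insert, Finset.mem_singleton] at hz
          rcases hz with rfl | rfl <;> simp [hbB, hu0v0.symm]
        calc 2 = ({b, v0} : Finset (Fin n)).card := (Finset.card_pair hbv0).symm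
          _ ≤ _ := Finset.card_le_card hsub
      -- congruences
      have hab : a ≠ b := by
        intro e
        exact hdisj a ⟨haA, by rw [e]; exact hbB⟩
      have e1 := hA a u0 hau0
      have e2 := hA b v0 hbv0
      have e3 := hA a b hab
      rw [htA a haA, htA u0 hu0v0, hdAA a u0 haA hu0v0 hau0] at e1
      rw [htB b hbB, htB v0 hu0v0.symm, hdBB b v0 hbB hu0v0.symm hbv0] at e2
      rw [htA a haA, htB b hbB,
        SimpleGraph.dist_eq_one_iff_adj.mpr (hcross a b haA hbB)] at e3
      push_cast at e1 e2 e3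
      set cA : ℕ := (Finset.univ.filter (fun y : Fin n => G.Adj y v0)).card with hcAdef
      set cB : ℕ := (Finset.univ.filter (fun y : Fin n => G.Adj y u0)).card with hcBdef
      clear_value cA cB
      set α : ℤ := 2 * (n : ℤ) - 2 - (cB : ℤ) with hα
      set β : ℤ := 2 * (n : ℤ) - 2 - (cA : ℤ) with hβ
      have h16 : (2 * (n : ℤ) - 1) ∣ α * α * (β * β) - 16 := by
        have hd : (2 * (n : ℤ) - 1) ∣ _ := dvd_add (e1.mul_right (β * β)) (e2.mul_left 4)
        convert hd using 1
        push_cast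
        ring
      have h1 : (2 * (n : ℤ) - 1) ∣ α * α * (β * β) - 1 := by
        have hd : (2 * (n : ℤ) - 1) ∣ _ := e3.mul_right (α * β + 1)
        convert hd using 1
        push_cast
        ring
      have h15 : (2 * (n : ℤ) - 1) ∣ (15 : ℤ) := by
        have hd : (2 * (n : ℤ) - 1) ∣ _ := dvd_sub h1 h16
        convert hd using 1
        ring
      have hqle : (2 * (n : ℤ) - 1) ≤ 15 := Int.le_of_dvd (by norm_num) h15
      have hn8 : n ≤ 8 := by omega
      have hn4 : 4 ≤ n := by omega
      rw [hα, hβ] at e3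
      interval_cases n
      · norm_num at h15
      · norm_num at h15
      · norm_num at h15
      · norm_num at h15
      · -- n = 8
        have hcA6 : cA ≤ 6 := by omega
        interval_cases cA <;>
          · have : cB = 8 - cA := by omega
            omega
    · -- B = {v0}: G is the star with center v0
      push_neg at hB2
      have hc : ∀ x y : Fin n, G.Adj x y ↔ ¬ (x = v0 ↔ y = v0) := by
        intro x y
        constructor
        · intro hxy hiff
          by_cases hx : x = v0
          · exact hxy.ne (hx.trans (hiff.mp hx).symm)
          · have hy : y ≠ v0 := fun e => hx (hiff.mpr e)
            have hx' : G.Adj x v0 := by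
              rcases hcover x with h1 | h1
              · exact h1
              · exact absurd (hB2 x h1) hx
            have hy' : G.Adj y v0 := by
              rcases hcover y with h1 | h1
              · exact h1
              · exact absurd (hB2 y h1) hy
            exact hAind x y hx' hy' hxy
        · intro hne
          by_cases hx : x = v0 <;> by_cases hy : y = v0
          · exact absurd (iff_of_true hx hy) hne
          · have hy' : G.Adj y v0 := by
              rcases hcover y with h1 | h1
              · exact h1
              · exact absurd (hB2 y h1) hy
            rw [hx]
            exact hy'.symm
          · have hx' : G.Adj x v0 := by
              rcases hcover x with h1 | h1
              · exact h1
              · exact absurd (hB2 x h1) hx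
            rw [hy]
            exact hx'
          · exact absurd (iff_of_false hx hy) hne
      exact star_center_iso hn G v0 hc
  · -- A = {u0}: G is the star with center u0
    push_neg at hA2
    have hc : ∀ x y : Fin n, G.Adj x y ↔ ¬ (x = u0 ↔ y = u0) := by
      intro x y
      constructor
      · intro hxy hiff
        by_cases hx : x = u0
        · exact hxy.ne (hx.trans (hiff.mp hx).symm)
        · have hy : y ≠ u0 := fun e => hx (hiff.mpr e)
          have hx' : G.Adj x u0 := by
            rcases hcover x with h1 | h1
            · exact absurd (hA2 x h1) hx
            · exact h1
          have hy' : G.Adj y u0 := by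
            rcases hcover y with h1 | h1
            · exact absurd (hA2 y h1) hy
            · exact h1
          exact hBind x y hx' hy' hxy
      · intro hne
        by_cases hx : x = u0 <;> by_cases hy : y = u0
        · exact absurd (iff_of_true hx hy) hne
        · have hy' : G.Adj y u0 := by
            rcases hcover y with h1 | h1
            · exact absurd (hA2 y h1) hy
            · exact h1
          rw [hx]
          exact hy'.symm
        · have hx' : G.Adj x u0 := by
            rcases hcover x with h1 | h1
            · exact absurd (hA2 x h1) hx
            · exact h1
          rw [hy]
          exact hx'
        · exact absurd (iff_of_false hx hy) hne
    exact star_center_iso hn G u0 hc
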